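/- arXiv:2008.09191 — 3 statements merged into one kernel-verified Lean document; each statement's English description precedes it below -/
import Mathlib

section
/- Every trace-free skew-Hermitian endomorphism of ℂ^r can be written as a commutator of two skew-Hermitian endomorphisms: if u ∈ End(ℂ^r) satisfies u* = -u and Tr(u) = 0, then there exist A, Γ ∈ End(ℂ^r) with A* = -A, Γ* = -Γ, and u = AΓ - ΓA. -/
open Complex Matrix Finset Real

noncomputable def theta (r : ℕ) (m : ℤ) : ℂ := Complex.exp (2 * Real.pi * Complex.I * m / r)

lemma theta_zero (r : ℕ) : theta r 0 = 1 := by simp [theta]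

lemma theta_add (r : ℕ) (m n : ℤ) : theta r m * theta r n = theta r (m + n) := by
  rw [theta, theta, theta, ← Complex.exp_add]
  congr 1
  push_cast
  ring

lemma theta_conj (r : ℕ) (m : ℤ) : (starRingEnd ℂ) (theta r m) = theta r (-m) := by
  rw [theta, theta, ← Complex.exp_conj]
  congr 1
  simp [map_div₀, Complex.conj_I, map_ofNat]

lemma theta_pow (r : ℕ) (m : ℤ) (n : ℕ) : theta r m ^ n = theta r (m * n) := by
  rw [theta, theta, ← Complex.exp_nat_mul]
  congr 1
  push_cast
  ring

lemma theta_r_dvd (r : ℕ) (m : ℤ) : theta r ((r : ℤ) * m) = 1 := by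
  rcases eq_or_ne r 0 with h | h
  · simp [theta, h]
  · rw [theta]
    have hr : (r : ℂ) ≠ 0 := Nat.cast_ne_zero.mpr h
    have : 2 * (Real.pi : ℂ) * Complex.I * ((r : ℤ) * m : ℤ) / (r : ℕ) = (m : ℤ) * (2 * Real.pi * Complex.I) := by
      push_cast
      field_simp
    rw [this, Complex.exp_int_mul_two_pi_mul_I]

lemma theta_ne_one (r : ℕ) (hr : r ≠ 0) (m : ℤ) (h : ¬ (r : ℤ) ∣ m) : theta r m ≠ 1 := by
  intro he
  rw [theta, Complex.exp_eq_one_iff] at he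
  obtain ⟨n, hn⟩ := he
  apply h
  have hrC : (r : ℂ) ≠ 0 := Nat.cast_ne_zero.mpr hr
  have hpi : (Real.pi : ℂ) ≠ 0 := Complex.ofReal_ne_zero.mpr Real.pi_ne_zero
  have h2 : (2 * (Real.pi : ℂ) * Complex.I) * (m : ℂ) = (2 * (Real.pi : ℂ) * Complex.I) * ((n : ℂ) * (r : ℂ)) := by
    field_simp at hn
    linear_combination (2 * (Real.pi : ℂ) * Complex.I) * hn
  have h3 := mul_left_cancel₀ (by simp [hpi, Complex.I_ne_zero] : (2 * (Real.pi : ℂ) * Complex.I) ≠ 0) h2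
  have h4 : (m : ℂ) = ((r * n : ℤ) : ℂ) := by push_cast; linear_combination h3
  exact ⟨n, by exact_mod_cast h4⟩

noncomputable def dftM (r : ℕ) : Matrix (Fin r) (Fin r) ℂ :=
  Matrix.of fun j k => theta r ((j : ℤ) * (k : ℤ)) * ((Real.sqrt r : ℝ) : ℂ)⁻¹

lemma fin_not_dvd {r : ℕ} {j k : Fin r} (h : j ≠ k) : ¬ (r : ℤ) ∣ ((j : ℤ) - (k : ℤ)) := by
  intro hdvd
  have hjk : (j : ℕ) ≠ (k : ℕ) := fun he => h (Fin.ext he)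
  have h0 := Int.eq_zero_of_abs_lt_dvd hdvd (by
    have hj := j.isLt
    have hk := k.isLt
    rw [abs_lt]
    omega)
  omega

lemma sqrt_inv_mul (r : ℕ) : (((Real.sqrt r : ℝ) : ℂ))⁻¹ * (((Real.sqrt r : ℝ) : ℂ))⁻¹ = ((r : ℂ))⁻¹ := by
  rw [← mul_inv, ← Complex.ofReal_mul, Real.mul_self_sqrt (Nat.cast_nonneg r)]
  norm_num

lemma dftM_mul_conjTranspose (r : ℕ) : dftM r * (dftM r)ᴴ = 1 := by
  ext j k
  rw [Matrix.mul_apply]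
  have hsummand : ∀ l : Fin r, dftM r j l * (dftM r)ᴴ l k
      = ((r : ℂ))⁻¹ * (theta r ((j : ℤ) - (k : ℤ))) ^ (l : ℕ) := by
    intro l
    rw [Matrix.conjTranspose_apply]
    simp only [dftM, Matrix.of_apply, Complex.star_def, _root_.map_mul, theta_conj]
    have hc : (starRingEnd ℂ) (((Real.sqrt r : ℝ) : ℂ))⁻¹ = (((Real.sqrt r : ℝ) : ℂ))⁻¹ := by
      rw [map_inv₀, Complex.conj_ofReal]
    rw [hc, theta_pow]
    calc theta r ((j:ℤ) * l) * ((Real.sqrt r : ℝ) : ℂ)⁻¹ *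
          (theta r (-((k:ℤ) * l)) * ((Real.sqrt r : ℝ) : ℂ)⁻¹)
        = (((Real.sqrt r : ℝ) : ℂ)⁻¹ * ((Real.sqrt r : ℝ) : ℂ)⁻¹) *
          (theta r ((j:ℤ) * l) * theta r (-((k:ℤ) * l))) := by ring
      _ = ((r : ℂ))⁻¹ * theta r (((j:ℤ) - (k:ℤ)) * (l : ℕ)) := by
          rw [sqrt_inv_mul, theta_add]
          congr 2
          ring
  rw [Finset.sum_congr rfl (fun l _ => hsummand l), ← Finset.mul_sum]
  have hrpos : 0 < r := j.pos
  rcases eq_or_ne j k with he | hne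
  · subst he
    simp only [sub_self, theta_zero, one_pow, Finset.sum_const, Finset.card_univ,
      Fintype.card_fin, nsmul_eq_mul, mul_one, Matrix.one_apply_eq]
    exact inv_mul_cancel₀ (Nat.cast_ne_zero.mpr hrpos.ne')
  · rw [Matrix.one_apply_ne hne]
    have hx := theta_ne_one r hrpos.ne' _ (fin_not_dvd hne)
    have : ∑ l : Fin r, theta r ((j:ℤ) - (k:ℤ)) ^ (l : ℕ)
        = ∑ l ∈ Finset.range r, theta r ((j:ℤ) - (k:ℤ)) ^ l :=
      Fin.sum_univ_eq_sum_range _ r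
    rw [this, geom_sum_eq hx, theta_pow]
    rw [show ((j:ℤ) - (k:ℤ)) * ((r:ℕ) : ℤ) = (r : ℤ) * ((j:ℤ) - (k:ℤ)) by ring,
      theta_r_dvd]
    simp

lemma zeroDiag_commutator {r : ℕ} (N : Matrix (Fin r) (Fin r) ℂ)
    (hN : Nᴴ = -N) (hd : ∀ j, N j j = 0) :
    ∃ A Γ : Matrix (Fin r) (Fin r) ℂ,
      Aᴴ = -A ∧ Γᴴ = -Γ ∧ N = A * Γ - Γ * A := by
  refine ⟨Matrix.diagonal (fun j => Complex.I * (j : ℕ)),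
    Matrix.of (fun j k => N j k * (Complex.I * ((j : ℕ) - (k : ℕ) : ℂ))⁻¹), ?_, ?_, ?_⟩
  · rw [Matrix.diagonal_conjTranspose]
    have : (star fun j : Fin r => Complex.I * ((j : ℕ) : ℂ)) = (fun j : Fin r => -(Complex.I * ((j : ℕ) : ℂ))) := by
      funext j
      simp [Complex.star_def, Complex.conj_I]
    rw [this, Matrix.diagonal_neg]
  · ext j k
    rw [Matrix.conjTranspose_apply]
    simp only [Matrix.neg_apply, Matrix.of_apply]
    have hNc : star (N k j) = -N j k := by
      rw [← Matrix.conjTranspose_apply, hN, Matrix.neg_apply]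
    rw [star_mul', hNc]
    have : star ((Complex.I * ((k : ℕ) - (j : ℕ) : ℂ))⁻¹) = (Complex.I * ((j : ℕ) - (k : ℕ) : ℂ))⁻¹ := by
      rw [star_inv₀]
      congr 1
      simp [Complex.star_def, _root_.map_mul, Complex.conj_I, map_sub]
      ring
    rw [this]
    ring
  · ext j k
    simp only [Matrix.sub_apply, Matrix.diagonal_mul, Matrix.mul_diagonal, Matrix.of_apply]
    rcases eq_or_ne j k with he | hne
    · subst he
      simp [hd j]
    · have hjk : ((j : ℕ) : ℂ) ≠ ((k : ℕ) : ℂ) := by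
        exact_mod_cast fun he => hne (Fin.ext (Nat.cast_injective he))
      have hz : Complex.I * (((j : ℕ) : ℂ) - ((k : ℕ) : ℂ)) ≠ 0 :=
        mul_ne_zero Complex.I_ne_zero (sub_ne_zero.mpr hjk)
      field_simp

lemma dftM_star_mul_self (r : ℕ) (j k : Fin r) :
    star (dftM r j k) * dftM r j k = ((r : ℂ))⁻¹ := by
  simp only [dftM, Matrix.of_apply, Complex.star_def, _root_.map_mul, theta_conj, map_inv₀,
    Complex.conj_ofReal]
  calc theta r (-((j:ℤ) * k)) * ((Real.sqrt r : ℝ) : ℂ)⁻¹ * (theta r ((j:ℤ) * k) * ((Real.sqrt r : ℝ) : ℂ)⁻¹)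
      = (((Real.sqrt r : ℝ) : ℂ)⁻¹ * ((Real.sqrt r : ℝ) : ℂ)⁻¹) * (theta r (-((j:ℤ) * k)) * theta r ((j:ℤ) * k)) := by
        ring
    _ = ((r : ℂ))⁻¹ := by
        rw [sqrt_inv_mul, theta_add, neg_add_cancel, theta_zero, mul_one]

lemma conj_skew {n : Type*} [Fintype n] (W X : Matrix n n ℂ) (hX : Xᴴ = -X) :
    (W * X * Wᴴ)ᴴ = -(W * X * Wᴴ) := by
  rw [Matrix.conjTranspose_mul, Matrix.conjTranspose_mul, Matrix.conjTranspose_conjTranspose, hX]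
  noncomm_ring

/-- Every trace-free skew-Hermitian endomorphism of `ℂ^r` is a commutator
of two skew-Hermitian endomorphisms. -/
theorem traceless_skewHermitian_is_commutator_of_skewHermitian
    (r : ℕ) (u : Matrix (Fin r) (Fin r) ℂ)
    (hu : u.conjTranspose = -u) (htr : u.trace = 0) :
    ∃ A Γ : Matrix (Fin r) (Fin r) ℂ,
      A.conjTranspose = -A ∧ Γ.conjTranspose = -Γ ∧ u = A * Γ - Γ * A := by
  classical
  set H : Matrix (Fin r) (Fin r) ℂ := Complex.I • u with hHdef
  have hH : H.IsHermitian := by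
    rw [Matrix.IsHermitian, hHdef, Matrix.conjTranspose_smul, hu]
    simp [Complex.star_def, Complex.conj_I]
  have huH : u = (-Complex.I) • H := by
    rw [hHdef, smul_smul]
    simp
  set lam := hH.eigenvalues with hlam
  set V : Matrix (Fin r) (Fin r) ℂ := (hH.eigenvectorUnitary : Matrix (Fin r) (Fin r) ℂ) with hV
  have hVV : V * Vᴴ = 1 := by
    rw [← Matrix.star_eq_conjTranspose]
    exact (Matrix.mem_unitaryGroup_iff).mp (hH.eigenvectorUnitary).2
  have hVV' : Vᴴ * V = 1 := mul_eq_one_comm.mp hVV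
  set c : Fin r → ℂ := fun i => (-Complex.I) * (lam i : ℂ) with hc
  set D : Matrix (Fin r) (Fin r) ℂ := Matrix.diagonal c with hD
  have hDsm : (-Complex.I) • Matrix.diagonal (RCLike.ofReal ∘ hH.eigenvalues) = D := by
    have hfc : (-Complex.I) • (RCLike.ofReal ∘ hH.eigenvalues : Fin r → ℂ) = c := by
      funext i
      simp [hc, hlam, Pi.smul_apply, smul_eq_mul]
    rw [hD, ← Matrix.diagonal_smul, hfc]
  have hspec : u = V * D * Vᴴ := by
    have h1 := hH.spectral_theorem
    rw [Unitary.conjStarAlgAut_apply, Matrix.star_eq_conjTranspose, ← hV] at h1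
    rw [huH, h1, ← hDsm, Matrix.mul_smul, Matrix.smul_mul]
  -- sum of c is zero
  have hsum : ∑ i, c i = 0 := by
    have h1 : u.trace = D.trace := by
      rw [hspec, Matrix.trace_mul_cycle, hVV', Matrix.one_mul]
    rw [← Matrix.trace_diagonal, ← hD, ← h1, htr]
  set F := dftM r with hF
  have hFF : F * Fᴴ = 1 := dftM_mul_conjTranspose r
  have hFF' : Fᴴ * F = 1 := mul_eq_one_comm.mp hFF
  set W := V * F with hW
  have hW1 : W * Wᴴ = 1 := by
    rw [hW, Matrix.conjTranspose_mul]
    calc V * F * (Fᴴ * Vᴴ) = V * (F * Fᴴ) * Vᴴ := by noncomm_ring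
      _ = 1 := by rw [hFF, Matrix.mul_one, hVV]
  have hW2 : Wᴴ * W = 1 := mul_eq_one_comm.mp hW1
  set M := Fᴴ * D * F with hM
  have hkey : W * M * Wᴴ = V * D * Vᴴ := by
    rw [hW, hM, Matrix.conjTranspose_mul]
    calc V * F * (Fᴴ * D * F) * (Fᴴ * Vᴴ)
        = V * ((F * Fᴴ) * D * (F * Fᴴ)) * Vᴴ := by noncomm_ring
      _ = V * D * Vᴴ := by rw [hFF, Matrix.one_mul, Matrix.mul_one, Matrix.mul_assoc]
  have hMskew : Mᴴ = -M := by
    have hDskew : Dᴴ = -D := by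
      rw [hD, Matrix.diagonal_conjTranspose]
      have hsc : star c = -c := by
        funext i
        simp [hc, Pi.star_apply, Pi.neg_apply, Complex.star_def, _root_.map_mul, Complex.conj_I,
          Complex.conj_ofReal]
      rw [hsc]
      simp
    rw [hM, Matrix.conjTranspose_mul, Matrix.conjTranspose_mul, Matrix.conjTranspose_conjTranspose,
      hDskew]
    noncomm_ring
  have hMdiag : ∀ k, M k k = 0 := by
    intro k
    rw [hM, Matrix.mul_apply]
    have hterm : ∀ j, (Fᴴ * D) k j * F j k = c j * ((r : ℂ))⁻¹ := by
      intro j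
      rw [hD, Matrix.mul_diagonal, Matrix.conjTranspose_apply]
      calc star (F j k) * c j * F j k = c j * (star (F j k) * F j k) := by ring
        _ = c j * ((r : ℂ))⁻¹ := by rw [hF, dftM_star_mul_self]
    rw [Finset.sum_congr rfl (fun j _ => hterm j), ← Finset.sum_mul, hsum, zero_mul]
  obtain ⟨A₀, Γ₀, hA₀, hΓ₀, hMcomm⟩ := zeroDiag_commutator M hMskew hMdiag
  refine ⟨W * A₀ * Wᴴ, W * Γ₀ * Wᴴ, conj_skew W A₀ hA₀, conj_skew W Γ₀ hΓ₀, ?_⟩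
  · have mul_conj : ∀ X Y : Matrix (Fin r) (Fin r) ℂ,
        (W * X * Wᴴ) * (W * Y * Wᴴ) = W * (X * Y) * Wᴴ := by
      intro X Y
      rw [show (W * X * Wᴴ) * (W * Y * Wᴴ) = W * X * ((Wᴴ * W) * (Y * Wᴴ)) by noncomm_ring,
        hW2, Matrix.one_mul]
      noncomm_ring
    rw [mul_conj, mul_conj, hspec, ← hkey, hMcomm]
    noncomm_ring
end

section
/- With respect to the Fischer inner product ⟨P,Q⟩ = ∂(P)(conj Q) on homogeneous polynomials, the adjoint of the multiplication map Φ(Q) = R·Q by a fixed homogeneous polynomial R of degree k (mapping P_m → P_{m+k}) is the constant-coefficient differential operator P ↦ ∂(conj R)P. -/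
open MvPolynomial

/-- The Fischer inner product `⟨P,Q⟩ = ∂(P)(conj Q) = ∑_α α! a_α conj(b_α)`. -/
noncomputable def fischer (n : ℕ) (P Q : MvPolynomial (Fin n) ℂ) : ℂ :=
  ∑ α ∈ P.support ∪ Q.support,
    ((∏ i : Fin n, Nat.factorial (α i) : ℕ) : ℂ) * P.coeff α * (starRingEnd ℂ) (Q.coeff α)

/-- The constant-coefficient differential operator `∂(R) = ∑_α c_α ∂^α` attached to
`R = ∑_α c_α v^α`, applied to `P` (using `∂^α v^β = (∏ᵢ (βᵢ)!/(βᵢ-αᵢ)!) v^{β-α}`). -/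
noncomputable def fischerOp (n : ℕ) (R P : MvPolynomial (Fin n) ℂ) :
    MvPolynomial (Fin n) ℂ :=
  ∑ α ∈ R.support, ∑ β ∈ P.support,
    (monomial (β - α))
      (((∏ i : Fin n, (β i).descFactorial (α i) : ℕ) : ℂ) * R.coeff α * P.coeff β)

lemma fischer_eq_right (n : ℕ) (X Y : MvPolynomial (Fin n) ℂ) :
    fischer n X Y = ∑ β ∈ Y.support,
      ((∏ i : Fin n, Nat.factorial (β i) : ℕ) : ℂ) * X.coeff β
        * (starRingEnd ℂ) (Y.coeff β) := by
  refine (Finset.sum_subset Finset.subset_union_right ?_).symm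
  intro β _ hβ
  rw [MvPolynomial.notMem_support_iff.mp hβ, map_zero, mul_zero]

lemma fischer_eq_left (n : ℕ) (X Y : MvPolynomial (Fin n) ℂ) :
    fischer n X Y = ∑ β ∈ X.support,
      ((∏ i : Fin n, Nat.factorial (β i) : ℕ) : ℂ) * X.coeff β
        * (starRingEnd ℂ) (Y.coeff β) := by
  refine (Finset.sum_subset Finset.subset_union_left ?_).symm
  intro β _ hβ
  rw [MvPolynomial.notMem_support_iff.mp hβ, mul_zero, zero_mul]

lemma coeff_mul_support (n : ℕ) (R Q : MvPolynomial (Fin n) ℂ) (β : Fin n →₀ ℕ) :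
    (R * Q).coeff β =
      ∑ α ∈ R.support, ∑ δ ∈ Q.support,
        if α + δ = β then R.coeff α * Q.coeff δ else 0 := by
  conv_lhs => rw [R.as_sum, Q.as_sum, Finset.sum_mul_sum]
  rw [MvPolynomial.coeff_sum]
  refine Finset.sum_congr rfl fun α _ => ?_
  rw [MvPolynomial.coeff_sum]
  refine Finset.sum_congr rfl fun δ _ => ?_
  rw [MvPolynomial.monomial_mul, MvPolynomial.coeff_monomial]

lemma factorial_prod_eq (n : ℕ) (α δ : Fin n →₀ ℕ) :
    (∏ i : Fin n, Nat.factorial ((α + δ) i))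
      = (∏ i : Fin n, Nat.factorial (δ i))
        * ∏ i : Fin n, Nat.descFactorial ((α + δ) i) (α i) := by
  rw [← Finset.prod_mul_distrib]
  refine Finset.prod_congr rfl fun i _ => ?_
  have h : α i ≤ (α + δ) i := by simp
  have := Nat.factorial_mul_descFactorial (n := (α + δ) i) (k := α i) h
  simpa [Finsupp.add_apply] using this.symm

/-- With respect to the Fischer inner product, the adjoint of multiplication
by a fixed homogeneous polynomial `R` of degree `k` (mapping `P_m → P_{m+k}`) is the
constant-coefficient differential operator `P ↦ ∂(conj R) P`. -/
theorem fischer_adjoint_of_multiplication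
    (n k m : ℕ) (R Q P : MvPolynomial (Fin n) ℂ)
    (hR : R.IsHomogeneous k) (hQ : Q.IsHomogeneous m) (hP : P.IsHomogeneous (m + k)) :
    fischer n (R * Q) P = fischer n Q (fischerOp n (map (starRingEnd ℂ) R) P) := by
  classical
  rw [fischer_eq_right, fischer_eq_left]
  -- compute the coefficients of the differential operator applied to `P`
  have hsupp : (map (starRingEnd ℂ) R).support = R.support :=
    MvPolynomial.support_map_of_injective _ (RingHom.injective _)
  have hD : ∀ γ : Fin n →₀ ℕ, (fischerOp n (map (starRingEnd ℂ) R) P).coeff γ =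
      ∑ α ∈ R.support, ∑ β ∈ P.support,
        if β - α = γ then
          ((∏ i : Fin n, (β i).descFactorial (α i) : ℕ) : ℂ)
            * (starRingEnd ℂ) (R.coeff α) * P.coeff β
        else 0 := by
    intro γ
    rw [fischerOp, MvPolynomial.coeff_sum, hsupp]
    refine Finset.sum_congr rfl fun α _ => ?_
    rw [MvPolynomial.coeff_sum]
    refine Finset.sum_congr rfl fun β _ => ?_
    rw [MvPolynomial.coeff_monomial, MvPolynomial.coeff_map]
  -- LHS as a double sum over the supports of R and Q
  have hLHS : (∑ β ∈ P.support,
      ((∏ i : Fin n, Nat.factorial (β i) : ℕ) : ℂ) * (R * Q).coeff β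
        * (starRingEnd ℂ) (P.coeff β))
      = ∑ α ∈ R.support, ∑ δ ∈ Q.support,
          ((∏ i : Fin n, Nat.factorial ((α + δ) i) : ℕ) : ℂ)
            * (R.coeff α * Q.coeff δ) * (starRingEnd ℂ) (P.coeff (α + δ)) := by
    have h1 : (∑ β ∈ P.support,
        ((∏ i : Fin n, Nat.factorial (β i) : ℕ) : ℂ) * (R * Q).coeff β
          * (starRingEnd ℂ) (P.coeff β))
        = ∑ β ∈ P.support, ∑ α ∈ R.support, ∑ δ ∈ Q.support,
            if α + δ = β then
              ((∏ i : Fin n, Nat.factorial (β i) : ℕ) : ℂ)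
                * (R.coeff α * Q.coeff δ) * (starRingEnd ℂ) (P.coeff β)
            else 0 := by
      refine Finset.sum_congr rfl fun β _ => ?_
      rw [coeff_mul_support]
      simp only [Finset.mul_sum, Finset.sum_mul, mul_ite, ite_mul, mul_zero, zero_mul]
    rw [h1, Finset.sum_comm]
    refine Finset.sum_congr rfl fun α _ => ?_
    rw [Finset.sum_comm]
    refine Finset.sum_congr rfl fun δ _ => ?_
    rw [Finset.sum_ite_eq P.support (α + δ)]
    by_cases h : α + δ ∈ P.support
    · rw [if_pos h]
    · rw [if_neg h, MvPolynomial.notMem_support_iff.mp h, map_zero, mul_zero]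
  -- RHS as a double sum over the supports of R and P
  have hRHS : (∑ γ ∈ Q.support,
      ((∏ i : Fin n, Nat.factorial (γ i) : ℕ) : ℂ) * Q.coeff γ
        * (starRingEnd ℂ) ((fischerOp n (map (starRingEnd ℂ) R) P).coeff γ))
      = ∑ α ∈ R.support, ∑ β ∈ P.support,
          ((∏ i : Fin n, Nat.factorial ((β - α) i) : ℕ) : ℂ) * Q.coeff (β - α)
            * (((∏ i : Fin n, (β i).descFactorial (α i) : ℕ) : ℂ)
              * R.coeff α * (starRingEnd ℂ) (P.coeff β)) := by
    have h1 : (∑ γ ∈ Q.support,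
        ((∏ i : Fin n, Nat.factorial (γ i) : ℕ) : ℂ) * Q.coeff γ
          * (starRingEnd ℂ) ((fischerOp n (map (starRingEnd ℂ) R) P).coeff γ))
        = ∑ γ ∈ Q.support, ∑ α ∈ R.support, ∑ β ∈ P.support,
            if β - α = γ then
              ((∏ i : Fin n, Nat.factorial (γ i) : ℕ) : ℂ) * Q.coeff γ
                * (((∏ i : Fin n, (β i).descFactorial (α i) : ℕ) : ℂ)
                  * R.coeff α * (starRingEnd ℂ) (P.coeff β))
            else 0 := by
      refine Finset.sum_congr rfl fun γ _ => ?_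
      rw [hD γ, map_sum]
      rw [Finset.mul_sum]
      refine Finset.sum_congr rfl fun α _ => ?_
      rw [map_sum, Finset.mul_sum]
      refine Finset.sum_congr rfl fun β _ => ?_
      rw [apply_ite (starRingEnd ℂ), map_zero, mul_ite, mul_zero]
      congr 1
      simp only [map_mul, Complex.conj_conj, map_natCast]
    rw [h1, Finset.sum_comm]
    refine Finset.sum_congr rfl fun α _ => ?_
    rw [Finset.sum_comm]
    refine Finset.sum_congr rfl fun β _ => ?_
    rw [Finset.sum_ite_eq Q.support (β - α)]
    by_cases h : β - α ∈ Q.support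
    · rw [if_pos h]
    · rw [if_neg h, MvPolynomial.notMem_support_iff.mp h, mul_zero, zero_mul]
  rw [hLHS, hRHS]
  -- now compare the two double sums, fixing α
  refine Finset.sum_congr rfl fun α _ => ?_
  -- shrink both sides to where the summand is nonzero
  have hL : (∑ δ ∈ Q.support,
      ((∏ i : Fin n, Nat.factorial ((α + δ) i) : ℕ) : ℂ)
        * (R.coeff α * Q.coeff δ) * (starRingEnd ℂ) (P.coeff (α + δ)))
      = ∑ δ ∈ Q.support.filter (fun δ => α + δ ∈ P.support),
          ((∏ i : Fin n, Nat.factorial ((α + δ) i) : ℕ) : ℂ)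
            * (R.coeff α * Q.coeff δ) * (starRingEnd ℂ) (P.coeff (α + δ)) := by
    refine (Finset.sum_filter_of_ne ?_)
      |>.symm
    intro δ _ hne
    by_contra h
    exact hne (by rw [MvPolynomial.notMem_support_iff.mp h, map_zero, mul_zero])
  have hRt : (∑ β ∈ P.support,
      ((∏ i : Fin n, Nat.factorial ((β - α) i) : ℕ) : ℂ) * Q.coeff (β - α)
        * (((∏ i : Fin n, (β i).descFactorial (α i) : ℕ) : ℂ)
          * R.coeff α * (starRingEnd ℂ) (P.coeff β)))
      = ∑ β ∈ P.support.filter (fun β => α ≤ β ∧ β - α ∈ Q.support),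
          ((∏ i : Fin n, Nat.factorial ((β - α) i) : ℕ) : ℂ) * Q.coeff (β - α)
            * (((∏ i : Fin n, (β i).descFactorial (α i) : ℕ) : ℂ)
              * R.coeff α * (starRingEnd ℂ) (P.coeff β)) := by
    refine (Finset.sum_filter_of_ne ?_).symm
    intro β _ hne
    constructor
    · by_contra h
      obtain ⟨i, hi⟩ : ∃ i, β i < α i := by
        by_contra h'
        push_neg at h'
        exact h (Finsupp.le_def.mpr fun i => h' i)
      refine hne ?_
      have : (∏ i : Fin n, (β i).descFactorial (α i)) = 0 :=
        Finset.prod_eq_zero (Finset.mem_univ i)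
          (Nat.descFactorial_eq_zero_iff_lt.mpr hi)
      rw [this]
      push_cast
      ring
    · by_contra h
      exact hne (by rw [MvPolynomial.notMem_support_iff.mp h, mul_zero, zero_mul])
  rw [hL, hRt]
  refine Finset.sum_nbij' (fun δ => α + δ) (fun β => β - α) ?_ ?_ ?_ ?_ ?_
  · intro δ hδ
    simp only [Finset.mem_filter] at hδ ⊢
    exact ⟨hδ.2, le_add_right le_rfl, by rw [add_tsub_cancel_left]; exact hδ.1⟩
  · intro β hβ
    simp only [Finset.mem_filter] at hβ ⊢
    refine ⟨hβ.2.2, ?_⟩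
    rw [add_tsub_cancel_of_le hβ.2.1]; exact hβ.1
  · intro δ _; exact add_tsub_cancel_left α δ
  · intro β hβ
    simp only [Finset.mem_filter] at hβ
    exact add_tsub_cancel_of_le hβ.2.1
  · intro δ _
    rw [add_tsub_cancel_left α δ, factorial_prod_eq]
    push_cast
    ring
end

section
/- If u is a section of the endomorphism bundle End(E) that is parallel along the flow (∇^{End(E)}_X u = 0) and pointwise self-adjoint (u* = u), and if the flow has a dense orbit on the compact manifold, then the distinct eigenvalues λ₁,...,λ_k of u(x) are constant over the whole manifold, u = Σᵢ λᵢ Πᵢ where Πᵢ is the spectral projection onto the λᵢ-eigenbundle, and each Πᵢ satisfies ∇^{End(E)}_X Πᵢ = 0. -/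
open Module.End

section Aux

variable {H : Type*} [NormedAddCommGroup H] [InnerProductSpace ℂ H] [FiniteDimensional ℂ H]

lemma clm_spectrum_eq_linearMap (T : H →L[ℂ] H) :
    spectrum ℂ T = spectrum ℂ (↑T : H →ₗ[ℂ] H) := by
  ext μ
  rw [spectrum.mem_iff, spectrum.mem_iff, not_iff_not,
    ContinuousLinearMap.isUnit_iff_bijective, Module.End.isUnit_iff]
  have h : ⇑(algebraMap ℂ (H →L[ℂ] H) μ - T) = ⇑(algebraMap ℂ (Module.End ℂ H) μ - ↑T) := by
    ext v
    simp [Algebra.algebraMap_eq_smul_one, Module.algebraMap_end_apply]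
  rw [h]

lemma hasEigenvalue_of_sim {T S A B : H →L[ℂ] H} (hBA : B ∘L A = 1)
    (hT : T = A ∘L (S ∘L B)) {μ : ℂ}
    (h : Module.End.HasEigenvalue (↑S : H →ₗ[ℂ] H) μ) :
    Module.End.HasEigenvalue (↑T : H →ₗ[ℂ] H) μ := by
  obtain ⟨v, hv⟩ := h.exists_hasEigenvector
  have hBAv : ∀ w : H, B (A w) = w := by
    intro w
    have := ContinuousLinearMap.ext_iff.mp hBA w
    simpa using this
  have hAv : A v ≠ 0 := by
    intro h0
    apply hv.2
    rw [← hBAv v, h0, map_zero]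
  have hSv : S v = μ • v := hv.apply_eq_smul
  refine hasEigenvalue_of_hasEigenvector ⟨?_, hAv⟩
  rw [mem_eigenspace_iff]
  show (↑T : H →ₗ[ℂ] H) (A v) = μ • A v
  simp only [ContinuousLinearMap.coe_coe]
  rw [hT]
  simp only [ContinuousLinearMap.comp_apply, hBAv, hSv, map_smul]

lemma eigenspace_map_isometry {T T' : H →L[ℂ] H} (W : H ≃ₗᵢ[ℂ] H)
    (hcomm : ∀ v, T' (W v) = W (T v)) (μ : ℂ) :
    Module.End.eigenspace (↑T' : H →ₗ[ℂ] H) μ =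
      (Module.End.eigenspace (↑T : H →ₗ[ℂ] H) μ).map (W.toLinearEquiv : H →ₗ[ℂ] H) := by
  ext w
  simp only [Submodule.mem_map, mem_eigenspace_iff, ContinuousLinearMap.coe_coe,
    LinearIsometryEquiv.coe_toLinearEquiv]
  constructor
  · intro hw
    refine ⟨W.symm w, ?_, by simp⟩
    apply W.injective
    rw [← hcomm, W.apply_symm_apply, hw, map_smul, W.apply_symm_apply]
  · rintro ⟨v, hv, rfl⟩
    show T' (W v) = μ • (W v)
    rw [hcomm, hv, map_smul]

lemma range_projCLM (K : Submodule ℂ H) :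
    LinearMap.range (↑(K.subtypeL ∘L Submodule.orthogonalProjectionOnto K) : H →ₗ[ℂ] H) = K := by
  apply le_antisymm
  · rintro _ ⟨v, rfl⟩
    exact (Submodule.orthogonalProjectionOnto K v).2
  · intro w hw
    refine ⟨w, ?_⟩
    simp only [ContinuousLinearMap.coe_coe, ContinuousLinearMap.coe_comp', Function.comp_apply, Submodule.coe_subtypeL',
      Submodule.coe_subtype]
    exact Submodule.starProjection_eq_self_iff.mpr hw

lemma idem_projCLM (K : Submodule ℂ H) :
    (K.subtypeL ∘L Submodule.orthogonalProjectionOnto K) ∘L (K.subtypeL ∘L Submodule.orthogonalProjectionOnto K)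
      = K.subtypeL ∘L Submodule.orthogonalProjectionOnto K := by
  ext v
  simp only [ContinuousLinearMap.comp_apply, Submodule.subtypeL_apply]
  exact congrArg _ (Subtype.ext
    (Submodule.starProjection_eq_self_iff.mpr (Submodule.orthogonalProjectionOnto K v).2))

lemma spectral_sum {k : ℕ} {lam : Fin k → ℝ} (hinj : Function.Injective lam)
    (T : H →L[ℂ] H) (hT : IsSelfAdjoint T)
    (hev : ∀ μ : ℂ, Module.End.HasEigenvalue (↑T : H →ₗ[ℂ] H) μ → ∃ i, (lam i : ℂ) = μ) :
    T = ∑ i, (lam i : ℂ) •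
      ((Module.End.eigenspace (↑T : H →ₗ[ℂ] H) (lam i)).subtypeL ∘L
        Submodule.orthogonalProjectionOnto (Module.End.eigenspace (↑T : H →ₗ[ℂ] H) (lam i))) := by
  have hsym := hT.isSymmetric
  have htop : (⨆ μ : ℂ, Module.End.eigenspace (↑T : H →ₗ[ℂ] H) μ) = ⊤ := by
    have h := hsym.orthogonalComplement_iSup_eigenspaces_eq_bot
    rwa [Submodule.orthogonal_eq_bot_iff] at h
  set P : Fin k → (H →L[ℂ] H) := fun i =>
    (Module.End.eigenspace (↑T : H →ₗ[ℂ] H) (lam i)).subtypeL ∘L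
      Submodule.orthogonalProjectionOnto (Module.End.eigenspace (↑T : H →ₗ[ℂ] H) (lam i)) with hP
  ext v
  have hv : v ∈ ⨆ μ : ℂ, Module.End.eigenspace (↑T : H →ₗ[ℂ] H) μ := by
    rw [htop]; exact Submodule.mem_top
  rw [ContinuousLinearMap.sum_apply]
  refine Submodule.iSup_induction (motive := fun w => T w = ∑ i, ((lam i : ℂ) • P i) w) _ hv
    (fun μ w hw => ?_) (by simp) (fun w₁ w₂ h₁ h₂ => ?_)
  · by_cases hw0 : w = 0
    · simp [hw0]
    obtain ⟨j, hj⟩ := hev μ (hasEigenvalue_of_hasEigenvector ⟨hw, hw0⟩)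
    subst hj
    have hTw : T w = (lam j : ℂ) • w := by
      have := mem_eigenspace_iff.mp hw
      simpa using this
    have hsum : ∑ i, ((lam i : ℂ) • P i) w = ((lam j : ℂ) • P j) w := by
      refine Finset.sum_eq_single j (fun i _ hij => ?_) (by simp)
      have hne : (lam i : ℂ) ≠ (lam j : ℂ) := by
        intro h
        exact hij (hinj (by exact_mod_cast h))
      have hzero : Submodule.orthogonalProjectionOnto
          (Module.End.eigenspace (↑T : H →ₗ[ℂ] H) (lam i)) w = 0 := by
        apply Submodule.orthogonalProjectionOnto_apply_of_mem_orthogonal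
        rw [Submodule.mem_orthogonal]
        intro a ha
        exact hsym.orthogonalFamily_eigenspaces hne ⟨a, ha⟩ ⟨w, hw⟩
      simp [hP, hzero, Submodule.starProjection_apply]
    rw [hTw, hsum, hP]
    simp only [ContinuousLinearMap.smul_apply, ContinuousLinearMap.comp_apply,
      Submodule.subtypeL_apply]
    rw [← Submodule.starProjection_apply, Submodule.starProjection_eq_self_iff.mpr hw]
  · have h₁' : T w₁ = ∑ i, ((lam i : ℂ) • P i) w₁ := h₁
    have h₂' : T w₂ = ∑ i, ((lam i : ℂ) • P i) w₂ := h₂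
    show T (w₁ + w₂) = ∑ i, ((lam i : ℂ) • P i) (w₁ + w₂)
    rw [map_add, h₁', h₂', ← Finset.sum_add_distrib]
    exact Finset.sum_congr rfl fun i _ => (map_add _ _ _).symm

end Aux

lemma proj_congr_aux {H : Type*} [NormedAddCommGroup H] [InnerProductSpace ℂ H]
    [FiniteDimensional ℂ H] {K K' : Submodule ℂ H} (h : K = K') (v : H) :
    (↑(Submodule.orthogonalProjectionOnto K v) : H) = ↑(Submodule.orthogonalProjectionOnto K' v) := by subst h; rfl

/-- If `u` is a section of `End(E)` parallel along a flow with a dense orbit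
on a compact manifold, and pointwise self-adjoint, then the distinct eigenvalues
`λ₁, …, λ_k` of `u(x)` are constant over the manifold, `u = ∑ᵢ λᵢ Πᵢ` where `Πᵢ(x)` is the
orthogonal (spectral) projection onto the `λᵢ`-eigenspace of `u(x)`, and each `Πᵢ` is itself
parallel along the flow. -/
theorem parallel_selfadjoint_section_spectral_decomposition
    {M H : Type*} [TopologicalSpace M] [CompactSpace M]
    [NormedAddCommGroup H] [InnerProductSpace ℂ H] [FiniteDimensional ℂ H]
    (φ : ℝ → M → M) (hφ0 : φ 0 = id)
    (hφ : ∀ s t : ℝ, φ (s + t) = φ s ∘ φ t)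
    (C : M → ℝ → (H ≃ₗᵢ[ℂ] H))
    (hC0 : ∀ x, C x 0 = LinearIsometryEquiv.refl ℂ H)
    (hCcoc : ∀ (x : M) (s t : ℝ) (v : H), C x (s + t) v = C (φ t x) s (C x t v))
    (x₀ : M) (hx₀ : Dense (Set.range fun t : ℝ => φ t x₀))
    (u : M → (H →L[ℂ] H)) (hu : Continuous u)
    (hsa : ∀ x, IsSelfAdjoint (u x))
    (hpar : ∀ (x : M) (t : ℝ) (h : H), u (φ t x) (C x t h) = C x t (u x h)) :
    ∃ (k : ℕ) (lam : Fin k → ℝ) (P : Fin k → M → (H →L[ℂ] H)),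
      Function.Injective lam ∧
      (∀ x, u x = ∑ i, (lam i : ℂ) • P i x) ∧
      (∀ i x, IsSelfAdjoint (P i x) ∧ P i x ∘L P i x = P i x ∧
        LinearMap.range (↑(P i x) : H →ₗ[ℂ] H) = Module.End.eigenspace (↑(u x) : H →ₗ[ℂ] H) (lam i)) ∧
      (∀ (i : Fin k) (x : M) (t : ℝ) (h : H), P i (φ t x) (C x t h) = C x t (P i x h)) ∧
      (∀ x, spectrum ℂ (u x) = Set.range fun i => (lam i : ℂ)) := by
  classical
  -- Step 1: every `u x` is similar to `u x₀` (compactness of the "unitary-like" set).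
  have hsim : ∀ x : M, ∃ A B : H →L[ℂ] H,
      A ∘L B = 1 ∧ B ∘L A = 1 ∧ u x = A ∘L (u x₀ ∘L B) := by
    intro x
    set f : (H →L[ℂ] H) × (H →L[ℂ] H) → (H →L[ℂ] H) :=
      fun p => p.1 ∘L (u x₀ ∘L p.2) with hf
    set K : Set ((H →L[ℂ] H) × (H →L[ℂ] H)) :=
      (({p | ‖p.1‖ ≤ 1} ∩ {p | ‖p.2‖ ≤ 1}) ∩ {p | p.1 ∘L p.2 = 1}) ∩ {p | p.2 ∘L p.1 = 1}
      with hKdef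
    have hmulcont : Continuous fun p : (H →L[ℂ] H) × (H →L[ℂ] H) => p.1 ∘L p.2 :=
      continuous_mul
    have hKclosed : IsClosed K := by
      refine IsClosed.inter (IsClosed.inter (IsClosed.inter ?_ ?_) ?_) ?_
      · exact isClosed_le continuous_fst.norm continuous_const
      · exact isClosed_le continuous_snd.norm continuous_const
      · exact isClosed_eq hmulcont continuous_const
      · exact isClosed_eq (hmulcont.comp continuous_swap) continuous_const
    have hball : IsCompact ((Metric.closedBall (0 : H →L[ℂ] H) 1) ×ˢ
        (Metric.closedBall (0 : H →L[ℂ] H) 1)) :=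
      (isCompact_closedBall _ _).prod (isCompact_closedBall _ _)
    have hsub : K ⊆ (Metric.closedBall (0 : H →L[ℂ] H) 1) ×ˢ
        (Metric.closedBall (0 : H →L[ℂ] H) 1) := by
      rintro p ⟨⟨⟨h1, h2⟩, -⟩, -⟩
      exact ⟨mem_closedBall_zero_iff.mpr h1, mem_closedBall_zero_iff.mpr h2⟩
    have hKcompact : IsCompact K := hball.of_isClosed_subset hKclosed hsub
    have hfcont : Continuous f := continuous_fst.mul (continuous_const.mul continuous_snd)
    have hΓclosed : IsClosed (f '' K) := (hKcompact.image hfcont).isClosed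
    have horb : ∀ t : ℝ, u (φ t x₀) ∈ f '' K := by
      intro t
      set W := C x₀ t with hW
      set A : H →L[ℂ] H := W.toLinearIsometry.toContinuousLinearMap with hA
      set B : H →L[ℂ] H := W.symm.toLinearIsometry.toContinuousLinearMap with hB
      have hAapp : ∀ v, A v = W v := fun v => rfl
      have hBapp : ∀ v, B v = W.symm v := fun v => rfl
      have hnA : ‖A‖ ≤ 1 :=
        ContinuousLinearMap.opNorm_le_bound _ zero_le_one fun v => by
          rw [hAapp, one_mul, W.norm_map]
      have hnB : ‖B‖ ≤ 1 :=
        ContinuousLinearMap.opNorm_le_bound _ zero_le_one fun v => by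
          rw [hBapp, one_mul, W.symm.norm_map]
      have hAB : A ∘L B = 1 := by ext v; simp [hAapp, hBapp]
      have hBA : B ∘L A = 1 := by ext v; simp [hAapp, hBapp]
      refine ⟨(A, B), ⟨⟨⟨hnA, hnB⟩, hAB⟩, hBA⟩, ?_⟩
      ext v
      have hp := hpar x₀ t (W.symm v)
      rw [show C x₀ t (W.symm v) = v from W.apply_symm_apply v] at hp
      show A (u x₀ (B v)) = u (φ t x₀) v
      rw [hAapp, hBapp, ← hp]
    have hcl : x ∈ closure (Set.range fun t : ℝ => φ t x₀) := hx₀ x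
    have h1 : u x ∈ closure (u '' Set.range fun t : ℝ => φ t x₀) :=
      image_closure_subset_closure_image hu ⟨x, hcl, rfl⟩
    have h2 : (u '' Set.range fun t : ℝ => φ t x₀) ⊆ f '' K := by
      rintro _ ⟨_, ⟨t, rfl⟩, rfl⟩; exact horb t
    have h3 : u x ∈ f '' K := by
      have := closure_mono h2 h1
      rwa [hΓclosed.closure_eq] at this
    obtain ⟨⟨A, B⟩, hmem, hfeq⟩ := h3
    exact ⟨A, B, hmem.1.2, hmem.2, hfeq.symm⟩
  -- Step 2: the eigenvalue set of `u x₀`.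
  have hfinS : Set.Finite {r : ℝ | Module.End.HasEigenvalue (↑(u x₀) : H →ₗ[ℂ] H) (r : ℂ)} := by
    have hfin : (spectrum ℂ (↑(u x₀) : H →ₗ[ℂ] H)).Finite := Module.End.finite_spectrum _
    have heq : {r : ℝ | Module.End.HasEigenvalue (↑(u x₀) : H →ₗ[ℂ] H) (r : ℂ)}
        = (fun r : ℝ => (r : ℂ)) ⁻¹' spectrum ℂ (↑(u x₀) : H →ₗ[ℂ] H) := by
      ext r
      exact hasEigenvalue_iff_mem_spectrum
    rw [heq]
    exact hfin.preimage Complex.ofReal_injective.injOn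
  set S : Finset ℝ := hfinS.toFinset with hS
  set lam : Fin S.card → ℝ := fun i => (S.equivFin.symm i : ℝ) with hlam
  have hlaminj : Function.Injective lam := fun i j hij =>
    S.equivFin.symm.injective (Subtype.ext hij)
  have hlam_mem : ∀ i, Module.End.HasEigenvalue (↑(u x₀) : H →ₗ[ℂ] H) ((lam i : ℝ) : ℂ) :=
    fun i => (Set.Finite.mem_toFinset hfinS).mp (S.equivFin.symm i).2
  have hmem_lam : ∀ r : ℝ,
      Module.End.HasEigenvalue (↑(u x₀) : H →ₗ[ℂ] H) (r : ℂ) → ∃ i, lam i = r := by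
    intro r hr
    have hrS : r ∈ S := (Set.Finite.mem_toFinset hfinS).mpr hr
    exact ⟨S.equivFin ⟨r, hrS⟩, by simp [hlam]⟩
  -- Step 3: eigenvalues of every `u x` are exactly the `lam i`.
  have hev_all : ∀ x : M, ∀ μ : ℂ,
      Module.End.HasEigenvalue (↑(u x) : H →ₗ[ℂ] H) μ → ∃ i, (lam i : ℂ) = μ := by
    intro x μ hμ
    have hreal : (μ.re : ℂ) = μ :=
      Complex.conj_eq_iff_re.mp ((hsa x).isSymmetric.conj_eigenvalue_eq_self hμ)
    obtain ⟨A, B, hAB, hBA, hux⟩ := hsim x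
    have hBAv : ∀ w, B (A w) = w := fun w => by
      simpa using ContinuousLinearMap.ext_iff.mp hBA w
    have hu₀ : u x₀ = B ∘L (u x ∘L A) := by
      ext v
      show u x₀ v = B (u x (A v))
      rw [hux]
      simp only [ContinuousLinearMap.comp_apply, hBAv]
    have hμ₀ : Module.End.HasEigenvalue (↑(u x₀) : H →ₗ[ℂ] H) μ :=
      hasEigenvalue_of_sim hAB hu₀ hμ
    rw [← hreal] at hμ₀
    obtain ⟨i, hi⟩ := hmem_lam μ.re hμ₀
    exact ⟨i, by rw [hi]; exact hreal⟩
  have hev_rev : ∀ x : M, ∀ i,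
      Module.End.HasEigenvalue (↑(u x) : H →ₗ[ℂ] H) ((lam i : ℝ) : ℂ) := by
    intro x i
    obtain ⟨A, B, hAB, hBA, hux⟩ := hsim x
    exact hasEigenvalue_of_sim hBA hux (hlam_mem i)
  -- Step 4: assemble.
  refine ⟨S.card, lam, fun i x =>
      (Module.End.eigenspace (↑(u x) : H →ₗ[ℂ] H) ((lam i : ℝ) : ℂ)).subtypeL ∘L
        Submodule.orthogonalProjectionOnto (Module.End.eigenspace (↑(u x) : H →ₗ[ℂ] H) ((lam i : ℝ) : ℂ)),
    hlaminj, ?_, ?_, ?_, ?_⟩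
  · intro x
    exact spectral_sum hlaminj (u x) (hsa x) (hev_all x)
  · intro i x
    exact ⟨isSelfAdjoint_starProjection _, idem_projCLM _, range_projCLM _⟩
  · intro i x t h
    have hK := eigenspace_map_isometry (T := u x) (T' := u (φ t x)) (C x t)
      (hpar x t) ((lam i : ℝ) : ℂ)
    simp only [ContinuousLinearMap.comp_apply, Submodule.subtypeL_apply]
    rw [proj_congr_aux hK, ← Submodule.starProjection_apply, Submodule.starProjection_map_apply,
      LinearIsometryEquiv.symm_apply_apply, Submodule.starProjection_apply]
  · intro x
    rw [clm_spectrum_eq_linearMap]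
    ext μ
    simp only [Set.mem_range]
    rw [← hasEigenvalue_iff_mem_spectrum]
    constructor
    · exact fun hμ => hev_all x μ hμ
    · rintro ⟨i, rfl⟩
      exact hev_rev x i
end
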